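/- Suppose the adaptive directional subdivision scheme with masks a₀, a₁ converges in C(ℝ²) and that for each ε ∈ E_∞ the limit function f_ε is compactly supported. Then for every ε ∈ E_∞, lim_{n→∞} sup { ‖∇(S_{P_nε} c)‖_∞ : c : ℤ² → ℝ bounded with ‖∇c‖_∞ ≤ 1 } = 0; that is, the iterated subdivision operators are asymptotically contractive on differences. -/

import Mathlib

/-- Bi-infinite two-dimensional integer index set `ℤ²`. -/
abbrev Z2 : Type := Fin 2 → ℤ

/-- The scaling matrix `W₀` with rows `(4,0)` and `(0,2)`. -/
def W0 : Matrix (Fin 2) (Fin 2) ℤ := !![4, 0; 0, 2]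

/-- The scaling matrix `W₁` with rows `(4,-4)` and `(0,2)`. -/
def W1 : Matrix (Fin 2) (Fin 2) ℤ := !![4, -4; 0, 2]

/-- `W_η` for `η ∈ {0,1}`. -/
def Wsel : Fin 2 → Matrix (Fin 2) (Fin 2) ℤ := ![W0, W1]

/-- A sequence `c : ℤ² → ℝ` is bounded. -/
def Bdd (c : Z2 → ℝ) : Prop := ∃ K : ℝ, ∀ α, |c α| ≤ K

/-- The subdivision operator `S_{a,W} c = Σ_α a(· − Wα) c(α)`. -/
noncomputable def subd (a : Z2 → ℝ) (W : Matrix (Fin 2) (Fin 2) ℤ) (c : Z2 → ℝ) : Z2 → ℝ :=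
  fun β => ∑' α : Z2, a (β - W.mulVec α) * c α

/-- The Dirac sequence `δ` on `ℤ²`. -/
noncomputable def delta : Z2 → ℝ := fun α => if α = 0 then 1 else 0

/-- The iterated scheme `S_ε = S_{ε_n} ⋯ S_{ε_1}` applied to `c`, for
`ε = [ε₁, …, ε_n]` (the head `ε₁` is applied first). -/
noncomputable def Ssub (a : Fin 2 → Z2 → ℝ) : List (Fin 2) → (Z2 → ℝ) → (Z2 → ℝ)
  | [], c => c
  | η :: rest, c => Ssub a rest (subd (a η) (Wsel η) c)

/-- `W_ε = W_{ε_n} ⋯ W_{ε_1}` for `ε = [ε₁, …, ε_n]`. -/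
def WprodL : List (Fin 2) → Matrix (Fin 2) (Fin 2) ℤ
  | [] => 1
  | η :: rest => WprodL rest * Wsel η

/-- `W_ε` viewed as a real matrix. -/
noncomputable def WR (ε : List (Fin 2)) : Matrix (Fin 2) (Fin 2) ℝ :=
  (WprodL ε).map (Int.cast : ℤ → ℝ)

/-- The initial segment `P_n ε = (ε₁, …, ε_n)` of `ε ∈ E_∞ = {0,1}^ℕ`. -/
def Pn (ε : ℕ → Fin 2) (n : ℕ) : List (Fin 2) := List.ofFn (fun i : Fin n => ε i)

/-- Cast of an integer vector to `ℝ²`. -/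
noncomputable def castV (α : Z2) : Fin 2 → ℝ := fun i => (α i : ℝ)

/-- The adaptive directional subdivision scheme with masks `a₀, a₁` converges in
`C(ℝ²)`: for every `ε ∈ E_∞` there is a nonzero, uniformly continuous `f_ε`
with `lim_{n→∞} sup_{α∈ℤ²} |f_ε(W_{P_nε}⁻¹ α) − S_{P_nε} δ (α)| = 0`. -/
def SchemeConverges (a : Fin 2 → Z2 → ℝ) : Prop :=
  ∀ ε : ℕ → Fin 2, ∃ f : (Fin 2 → ℝ) → ℝ, f ≠ 0 ∧ UniformContinuous f ∧
    ∀ η : ℝ, 0 < η → ∃ N : ℕ, ∀ n ≥ N, ∀ α : Z2,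
      |f ((WR (Pn ε n))⁻¹.mulVec (castV α)) - Ssub a (Pn ε n) delta α| < η

/-- The backward difference operator: `∇c = (c(· − e₁) − c, c(· − e₂) − c)`. -/
def nabla (c : Z2 → ℝ) : Z2 → (Fin 2 → ℝ) :=
  fun α => ![c (α - ![1, 0]) - c α, c (α - ![0, 1]) - c α]


-- ===== auxiliary development =====

-- aux
noncomputable def nrm (x : Fin 2 → ℝ) : ℝ := max |x 0| |x 1|
noncomputable def VR : Fin 2 → Matrix (Fin 2) (Fin 2) ℝ := ![!![1/4, 0; 0, 1/2], !![1/4, 1/2; 0, 1/2]]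
noncomputable def Wr (η : Fin 2) : Matrix (Fin 2) (Fin 2) ℝ := (Wsel η).map (Int.cast : ℤ → ℝ)

lemma mulVec_apply {R : Type*} [CommRing R] (M : Matrix (Fin 2) (Fin 2) R) (x : Fin 2 → R) (i : Fin 2) :
    M.mulVec x i = M i 0 * x 0 + M i 1 * x 1 := by
  simp [Matrix.mulVec, dotProduct, Fin.sum_univ_two]

lemma VW_eq_one (η : Fin 2) : VR η * Wr η = 1 := by
  fin_cases η <;>
  · ext i j
    fin_cases i <;> fin_cases j <;>
      norm_num [VR, Wr, Wsel, W0, W1, Matrix.mul_apply, Fin.sum_univ_two, Matrix.one_apply]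

lemma nrm_nonneg (x : Fin 2 → ℝ) : 0 ≤ nrm x := le_trans (abs_nonneg _) (le_max_left _ _)
lemma abs_le_nrm (x : Fin 2 → ℝ) (i : Fin 2) : |x i| ≤ nrm x := by
  fin_cases i
  · exact le_max_left _ _
  · exact le_max_right _ _
lemma nrm_le (x : Fin 2 → ℝ) (r : ℝ) (h : ∀ i, |x i| ≤ r) : nrm x ≤ r :=
  max_le (h 0) (h 1)
lemma nrm_add_le (x y : Fin 2 → ℝ) : nrm (x + y) ≤ nrm x + nrm y := by
  apply nrm_le
  intro i
  calc |(x+y) i| = |x i + y i| := by simp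
    _ ≤ |x i| + |y i| := abs_add_le _ _
    _ ≤ _ := add_le_add (abs_le_nrm x i) (abs_le_nrm y i)
lemma nrm_sub_le (x y : Fin 2 → ℝ) : nrm (x - y) ≤ nrm x + nrm y := by
  have := nrm_add_le x (-y)
  simpa [nrm, sub_eq_add_neg] using this

lemma VR_contract (η : Fin 2) (x : Fin 2 → ℝ) : nrm ((VR η).mulVec x) ≤ 3/4 * nrm x := by
  have h0 := abs_le_nrm x 0
  have h1 := abs_le_nrm x 1
  have hn := nrm_nonneg x
  fin_cases η <;>
  · apply nrm_le
    intro i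
    fin_cases i <;>
    · rw [mulVec_apply]
      norm_num [VR, -abs_mul]
      cases' abs_le.1 h0 with a b
      cases' abs_le.1 h1 with c d
      rw [abs_le]
      constructor <;> nlinarith

lemma castV_sub (x y : Z2) : castV (x - y) = castV x - castV y := by
  funext i; simp [castV]
lemma castV_add (x y : Z2) : castV (x + y) = castV x + castV y := by
  funext i; simp [castV]
lemma castV_mulVec (W : Matrix (Fin 2) (Fin 2) ℤ) (α : Z2) :
    castV (W.mulVec α) = (W.map (Int.cast : ℤ → ℝ)).mulVec (castV α) := by
  funext i
  rw [mulVec_apply]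
  simp only [castV, mulVec_apply, Matrix.map_apply]
  push_cast
  ring
lemma castV_inj : Function.Injective castV := by
  intro x y h
  funext i
  have := congrFun h i
  simpa [castV] using this

-- chunk B
lemma Wsel_det (η : Fin 2) : (Wsel η).det = 8 := by
  fin_cases η <;> simp [Wsel, W0, W1, Matrix.det_fin_two]

lemma WprodL_append (l : List (Fin 2)) (η : Fin 2) :
    WprodL (l ++ [η]) = Wsel η * WprodL l := by
  induction l with
  | nil => simp [WprodL]
  | cons h t ih => simp [WprodL, ih, mul_assoc]

lemma WR_nil : WR [] = 1 := by
  unfold WR WprodL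
  ext i j
  simp [Matrix.one_apply]

lemma WR_append (l : List (Fin 2)) (η : Fin 2) : WR (l ++ [η]) = Wr η * WR l := by
  unfold WR Wr
  rw [WprodL_append]
  exact (Matrix.map_mul (f := Int.castRingHom ℝ))

lemma WR_det (l : List (Fin 2)) : (WR l).det = 8 ^ l.length := by
  induction l using List.reverseRecOn with
  | nil => rw [WR_nil]; simp
  | append_singleton l η ih =>
      rw [WR_append, Matrix.det_mul, ih]
      have : (Wr η).det = 8 := by
        fin_cases η <;>
          simp [Wr, Wsel, W0, W1, Matrix.det_fin_two] <;> norm_num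
      rw [this]
      simp [pow_succ]
      ring

lemma WR_det_isUnit (l : List (Fin 2)) : IsUnit (WR l).det := by
  rw [WR_det]
  apply isUnit_iff_ne_zero.2
  positivity

lemma Wr_inv (η : Fin 2) : (Wr η)⁻¹ = VR η := Matrix.inv_eq_left_inv (VW_eq_one η)

lemma WRinv_cancel (l : List (Fin 2)) (x : Fin 2 → ℝ) :
    (WR l)⁻¹.mulVec ((WR l).mulVec x) = x := by
  rw [Matrix.mulVec_mulVec, Matrix.nonsing_inv_mul _ (WR_det_isUnit l)]
  simp

lemma WRinv_append (l : List (Fin 2)) (η : Fin 2) (x : Fin 2 → ℝ) :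
    (WR (l ++ [η]))⁻¹.mulVec x = (WR l)⁻¹.mulVec ((VR η).mulVec x) := by
  rw [WR_append, Matrix.mul_inv_rev, Wr_inv, ← Matrix.mulVec_mulVec]

lemma WRinv_nil (x : Fin 2 → ℝ) : (WR [])⁻¹.mulVec x = x := by
  rw [WR_nil]
  simp

lemma WRinv_contract (l : List (Fin 2)) (x : Fin 2 → ℝ) :
    nrm ((WR l)⁻¹.mulVec x) ≤ (3/4 : ℝ) ^ l.length * nrm x := by
  induction l using List.reverseRecOn generalizing x with
  | nil => rw [WRinv_nil]; simp
  | append_singleton l η ih =>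
      rw [WRinv_append]
      calc nrm ((WR l)⁻¹.mulVec ((VR η).mulVec x)) ≤ (3/4:ℝ)^l.length * nrm ((VR η).mulVec x) := ih _
        _ ≤ (3/4:ℝ)^l.length * (3/4 * nrm x) := by
            apply mul_le_mul_of_nonneg_left (VR_contract η x) (by positivity)
        _ = (3/4:ℝ)^(l ++ [η]).length * nrm x := by
            simp [pow_succ]
            ring

lemma mulVec_int_cancel (l : List (Fin 2)) (α : Z2) :
    (WR l)⁻¹.mulVec (castV ((WprodL l).mulVec α)) = castV α := by
  rw [castV_mulVec]
  exact WRinv_cancel l (castV α)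

lemma WprodL_mulVec_inj (l : List (Fin 2)) : Function.Injective (WprodL l).mulVec := by
  intro x y h
  apply castV_inj
  have : (WR l)⁻¹.mulVec (castV ((WprodL l).mulVec x)) = (WR l)⁻¹.mulVec (castV ((WprodL l).mulVec y)) := by rw [h]
  rwa [mulVec_int_cancel, mulVec_int_cancel] at this

-- chunk C
lemma Wsel_mulVec_inj (η : Fin 2) : Function.Injective (Wsel η).mulVec := by
  have := WprodL_mulVec_inj [η]
  simpa [WprodL] using this

/-- terms of subd vanish outside a finite set -/
lemma subd_fin_support (a : Z2 → ℝ) (ha : (Function.support a).Finite)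
    (W : Matrix (Fin 2) (Fin 2) ℤ) (hW : Function.Injective W.mulVec) (β : Z2) :
    {α : Z2 | a (β - W.mulVec α) ≠ 0}.Finite := by
  have hinj : Function.Injective (fun α : Z2 => β - W.mulVec α) := by
    intro x y h
    apply hW
    have : β - W.mulVec x = β - W.mulVec y := h
    linear_combination (norm := abel) - this
  exact Set.Finite.preimage (hinj.injOn) ha

/-- subd as a finite sum over any sufficiently large finset -/
lemma subd_eq_sum (a : Z2 → ℝ) (W : Matrix (Fin 2) (Fin 2) ℤ) (c : Z2 → ℝ) (β : Z2)
    (t : Finset Z2) (ht : ∀ α, a (β - W.mulVec α) ≠ 0 → α ∈ t) :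
    subd a W c β = ∑ α ∈ t, a (β - W.mulVec α) * c α := by
  apply tsum_eq_sum
  intro b hb
  have : a (β - W.mulVec b) = 0 := by
    by_contra h
    exact hb (ht b h)
  rw [this, zero_mul]

lemma subd_ne_zero (a : Z2 → ℝ) (W : Matrix (Fin 2) (Fin 2) ℤ) (c : Z2 → ℝ) (β : Z2)
    (h : subd a W c β ≠ 0) : ∃ α, a (β - W.mulVec α) ≠ 0 ∧ c α ≠ 0 := by
  by_contra hcon
  push_neg at hcon
  apply h
  unfold subd
  convert tsum_zero with α
  rcases eq_or_ne (a (β - W.mulVec α)) 0 with h1 | h1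
  · rw [h1, zero_mul]
  · rw [hcon α h1, mul_zero]

/-- shift lemma -/
lemma subd_shift (a : Z2 → ℝ) (W : Matrix (Fin 2) (Fin 2) ℤ) (c : Z2 → ℝ) (v β : Z2) :
    subd a W (fun γ => c (γ - v)) β = subd a W c (β - W.mulVec v) := by
  unfold subd
  rw [← (Equiv.subRight v).tsum_eq (fun α => a (β - W.mulVec v - W.mulVec α) * c α)]
  apply tsum_congr
  intro α
  simp only [Equiv.subRight_apply]
  congr 2
  rw [Matrix.mulVec_sub]
  abel

lemma Ssub_append (a : Fin 2 → Z2 → ℝ) (l : List (Fin 2)) (η : Fin 2) (c : Z2 → ℝ) :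
    Ssub a (l ++ [η]) c = subd (a η) (Wsel η) (Ssub a l c) := by
  induction l generalizing c with
  | nil => rfl
  | cons h t ih => exact ih _

lemma Pn_succ (ε : ℕ → Fin 2) (n : ℕ) : Pn ε (n + 1) = Pn ε n ++ [ε n] := by
  unfold Pn
  rw [List.ofFn_succ']
  simp [List.concat_eq_append]

lemma delta_support : Function.support delta ⊆ {0} := by
  intro x hx
  simp only [Function.mem_support, delta, ne_eq, ite_eq_right_iff] at hx
  by_contra h
  simp only [Set.mem_singleton_iff] at h
  exact h (by by_contra h2; exact hx (fun a => absurd a h2))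

-- chunk D
lemma subd_support_finite (a : Z2 → ℝ) (ha : (Function.support a).Finite)
    (W : Matrix (Fin 2) (Fin 2) ℤ) (c : Z2 → ℝ) (hc : (Function.support c).Finite) :
    (Function.support (subd a W c)).Finite := by
  apply Set.Finite.subset (Set.Finite.image (fun p : Z2 × Z2 => W.mulVec p.1 + p.2) (hc.prod ha))
  intro β hβ
  obtain ⟨α, h1, h2⟩ := subd_ne_zero a W c β hβ
  exact ⟨(α, β - W.mulVec α), ⟨h2, h1⟩, by show W.mulVec α + (β - W.mulVec α) = β; rw [add_comm, sub_add_cancel]⟩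

lemma Ssub_delta_support_finite (a : Fin 2 → Z2 → ℝ) (ha : ∀ η, (Function.support (a η)).Finite)
    (l : List (Fin 2)) : (Function.support (Ssub a l delta)).Finite := by
  induction l using List.reverseRecOn with
  | nil => exact Set.Finite.subset (Set.finite_singleton 0) delta_support
  | append_singleton l η ih =>
      rw [Ssub_append]
      exact subd_support_finite _ (ha η) _ _ ih

theorem Ssub_repr (a : Fin 2 → Z2 → ℝ) (ha : ∀ η, (Function.support (a η)).Finite)
    (l : List (Fin 2)) (c : Z2 → ℝ) (β : Z2) (t : Finset Z2)
    (ht : ∀ α, Ssub a l delta (β - (WprodL l).mulVec α) ≠ 0 → α ∈ t) :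
    Ssub a l c β = ∑ α ∈ t, Ssub a l delta (β - (WprodL l).mulVec α) * c α := by
  induction l using List.reverseRecOn generalizing c β t with
  | nil =>
      show c β = ∑ α ∈ t, delta (β - (1 : Matrix (Fin 2) (Fin 2) ℤ).mulVec α) * c α
      have hβt : β ∈ t := by
        apply ht
        show delta (β - (1 : Matrix (Fin 2) (Fin 2) ℤ).mulVec β) ≠ 0
        simp [Matrix.one_mulVec, delta]
      rw [Finset.sum_eq_single β]
      · simp [Matrix.one_mulVec, delta]
      · intro b hb hne
        have : delta (β - (1 : Matrix (Fin 2) (Fin 2) ℤ).mulVec b) = 0 := by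
          simp only [Matrix.one_mulVec, delta, ite_eq_right_iff]
          intro h
          exfalso
          apply hne
          have : β - b = 0 := h
          funext i
          have := congrFun this i
          simp at this ⊢
          omega
        rw [this, zero_mul]
      · intro h; exact absurd hβt h
  | append_singleton l η ih =>
      set g := Ssub a l delta with hg
      have hgfin : (Function.support g).Finite := Ssub_delta_support_finite a ha l
      set G := Ssub a (l ++ [η]) delta with hG
      have hGsub : G = subd (a η) (Wsel η) g := Ssub_append a l η delta
      -- finite set of relevant γ
      have ht1fin : {γ : Z2 | a η (β - (Wsel η).mulVec γ) ≠ 0}.Finite :=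
        subd_fin_support (a η) (ha η) _ (Wsel_mulVec_inj η) β
      set t₁ : Finset Z2 := ht1fin.toFinset with ht1
      have ht1mem : ∀ γ, a η (β - (Wsel η).mulVec γ) ≠ 0 → γ ∈ t₁ := by
        intro γ h; rw [ht1, Set.Finite.mem_toFinset]; exact h
      -- finite set of relevant α
      have hsfin : ∀ γ : Z2, {α : Z2 | g (γ - (WprodL l).mulVec α) ≠ 0}.Finite := fun γ =>
        subd_fin_support g hgfin _ (WprodL_mulVec_inj l) γ
      set s : Finset Z2 := t₁.biUnion (fun γ => (hsfin γ).toFinset) with hs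
      have hsmem : ∀ γ ∈ t₁, ∀ α, g (γ - (WprodL l).mulVec α) ≠ 0 → α ∈ s := by
        intro γ hγ α hα
        apply Finset.mem_biUnion.2
        exact ⟨γ, hγ, by rw [Set.Finite.mem_toFinset]; exact hα⟩
      have LHS1 : Ssub a (l ++ [η]) c β
          = ∑ γ ∈ t₁, a η (β - (Wsel η).mulVec γ) * Ssub a l c γ := by
        rw [Ssub_append]
        exact subd_eq_sum _ _ _ _ t₁ ht1mem
      have LHS2 : Ssub a (l ++ [η]) c β
          = ∑ α ∈ s, (∑ γ ∈ t₁, a η (β - (Wsel η).mulVec γ) * g (γ - (WprodL l).mulVec α)) * c α := by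
        rw [LHS1]
        have : ∀ γ ∈ t₁, a η (β - (Wsel η).mulVec γ) * Ssub a l c γ
            = ∑ α ∈ s, a η (β - (Wsel η).mulVec γ) * (g (γ - (WprodL l).mulVec α) * c α) := by
          intro γ hγ
          rw [ih c γ s (hsmem γ hγ), Finset.mul_sum]
        rw [Finset.sum_congr rfl this, Finset.sum_comm]
        apply Finset.sum_congr rfl
        intro α _
        rw [Finset.sum_mul]
        apply Finset.sum_congr rfl
        intro γ _
        ring
      -- identify inner sum with G
      have key : ∀ α : Z2, (∑ γ ∈ t₁, a η (β - (Wsel η).mulVec γ) * g (γ - (WprodL l).mulVec α))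
          = G (β - (WprodL (l ++ [η])).mulVec α) := by
        intro α
        have h1 : subd (a η) (Wsel η) (fun γ => g (γ - (WprodL l).mulVec α)) β
            = ∑ γ ∈ t₁, a η (β - (Wsel η).mulVec γ) * g (γ - (WprodL l).mulVec α) :=
          subd_eq_sum _ _ _ _ t₁ ht1mem
        rw [← h1, subd_shift, hGsub, WprodL_append, ← Matrix.mulVec_mulVec]
      have LHS3 : Ssub a (l ++ [η]) c β
          = ∑ α ∈ s, G (β - (WprodL (l ++ [η])).mulVec α) * c α := by
        rw [LHS2]
        exact Finset.sum_congr rfl (fun α _ => by rw [key α])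
      -- membership: nonzero G term implies in s
      have hGmem : ∀ α : Z2, G (β - (WprodL (l ++ [η])).mulVec α) ≠ 0 → α ∈ s := by
        intro α hα
        rw [hGsub] at hα
        obtain ⟨γ', h1, h2⟩ := subd_ne_zero _ _ _ _ hα
        have hγ : a η (β - (Wsel η).mulVec (γ' + (WprodL l).mulVec α)) ≠ 0 := by
          rw [Matrix.mulVec_add]
          have : β - (WprodL (l ++ [η])).mulVec α - (Wsel η).mulVec γ'
              = β - ((Wsel η).mulVec γ' + (Wsel η).mulVec ((WprodL l).mulVec α)) := by
            rw [WprodL_append, ← Matrix.mulVec_mulVec]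
            abel
          rw [← this]
          exact h1
        apply hsmem _ (ht1mem _ hγ) α
        simpa only [add_sub_cancel_right] using h2
      have e1 : ∑ α ∈ s, G (β - (WprodL (l ++ [η])).mulVec α) * c α
          = ∑ α ∈ s ∪ t, G (β - (WprodL (l ++ [η])).mulVec α) * c α := by
        apply Finset.sum_subset Finset.subset_union_left
        intro x _ hx
        rcases eq_or_ne (G (β - (WprodL (l ++ [η])).mulVec x)) 0 with h | h
        · rw [h, zero_mul]
        · exact absurd (hGmem x h) hx
      have e2 : ∑ α ∈ t, G (β - (WprodL (l ++ [η])).mulVec α) * c α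
          = ∑ α ∈ s ∪ t, G (β - (WprodL (l ++ [η])).mulVec α) * c α := by
        apply Finset.sum_subset Finset.subset_union_right
        intro x _ hx
        rcases eq_or_ne (G (β - (WprodL (l ++ [η])).mulVec x)) 0 with h | h
        · rw [h, zero_mul]
        · exact absurd (ht x h) hx
      rw [LHS3, e1, e2]

-- chunk E
def uvec : Fin 2 → Z2 := ![![1, 0], ![0, 1]]

lemma nabla_apply (c : Z2 → ℝ) (γ : Z2) (i : Fin 2) :
    nabla c γ i = c (γ - uvec i) - c γ := by
  fin_cases i <;> simp [nabla, uvec]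

lemma lip_step (c : Z2 → ℝ) (h : ∀ (α : Z2) (i : Fin 2), |nabla c α i| ≤ 1)
    (γ : Z2) (j : Fin 2) : |c (γ - uvec j) - c γ| ≤ 1 := by
  rw [← nabla_apply]; exact h γ j

lemma lip_step' (c : Z2 → ℝ) (h : ∀ (α : Z2) (i : Fin 2), |nabla c α i| ≤ 1)
    (γ : Z2) (j : Fin 2) : |c (γ + uvec j) - c γ| ≤ 1 := by
  have := lip_step c h (γ + uvec j) j
  simpa [abs_sub_comm] using this

lemma lip_move (c : Z2 → ℝ) (h : ∀ (α : Z2) (i : Fin 2), |nabla c α i| ≤ 1)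
    (γ : Z2) (j : Fin 2) (k : ℤ) : |c (γ + k • uvec j) - c γ| ≤ (|k| : ℝ) := by
  induction k using Int.induction_on with
  | zero => simp
  | succ i ih =>
      have key : γ + ((i : ℤ) + 1) • uvec j = (γ + (i : ℤ) • uvec j) + uvec j := by
        rw [add_smul, one_smul, add_assoc]
      rw [key]
      have h1 := lip_step' c h (γ + (i:ℤ) • uvec j) j
      have tri := abs_sub_le (c ((γ + (i:ℤ) • uvec j) + uvec j)) (c (γ + (i:ℤ) • uvec j)) (c γ)
      push_cast at ih ⊢
      rw [abs_of_nonneg (by positivity : (0:ℝ) ≤ (i:ℝ) + 1)]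
      rw [abs_of_nonneg (by positivity : (0:ℝ) ≤ (i:ℝ))] at ih
      linarith
  | pred i ih =>
      have key : γ + (-(i : ℤ) - 1) • uvec j = (γ + (-(i : ℤ)) • uvec j) - uvec j := by
        rw [sub_smul, one_smul, add_sub_assoc]
      rw [key]
      have h1 := lip_step c h (γ + (-(i:ℤ)) • uvec j) j
      have tri := abs_sub_le (c ((γ + (-(i:ℤ)) • uvec j) - uvec j)) (c (γ + (-(i:ℤ)) • uvec j)) (c γ)
      push_cast at ih ⊢
      have e2 : |(-(i:ℝ)) - 1| = (i : ℝ) + 1 := by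
        rw [abs_of_nonpos (by have : (0:ℝ) ≤ (i:ℝ) := Nat.cast_nonneg i; linarith)]; ring
      have e1 : |(-(i:ℝ))| = (i : ℝ) := by
        rw [abs_neg, abs_of_nonneg (by positivity)]
      rw [e2]; rw [e1] at ih; linarith

lemma lip2 (c : Z2 → ℝ) (h : ∀ (α : Z2) (i : Fin 2), |nabla c α i| ≤ 1)
    (α β : Z2) : |c α - c β| ≤ (|α 0 - β 0| : ℝ) + (|α 1 - β 1| : ℝ) := by
  set k0 := α 0 - β 0
  set k1 := α 1 - β 1
  have hdecomp : α = (β + k0 • uvec 0) + k1 • uvec 1 := by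
    funext i
    fin_cases i <;>
      simp [uvec, k0, k1, Matrix.vecHead, Matrix.vecTail, Pi.add_apply, Pi.smul_apply,
        smul_eq_mul] <;> ring
  calc |c α - c β| ≤ |c α - c (β + k0 • uvec 0)| + |c (β + k0 • uvec 0) - c β| := abs_sub_le _ _ _
    _ ≤ (|k1| : ℝ) + (|k0| : ℝ) := by
        apply add_le_add
        · rw [hdecomp]; exact lip_move c h _ 1 k1
        · exact lip_move c h _ 0 k0
    _ = _ := by simp only [k0, k1]; push_cast; ring

lemma finset_bound (s : Finset Z2) (F : Z2 → ℝ) : ∃ B : ℝ, 0 ≤ B ∧ ∀ x ∈ s, F x ≤ B := by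
  refine ⟨∑ x ∈ s, |F x|, Finset.sum_nonneg (fun _ _ => abs_nonneg _), fun x hx => ?_⟩
  calc F x ≤ |F x| := le_abs_self _
    _ ≤ ∑ y ∈ s, |F y| := Finset.single_le_sum (f := fun y => |F y|) (fun _ _ => abs_nonneg _) hx

lemma uc_nrm (f : (Fin 2 → ℝ) → ℝ) (hf : UniformContinuous f) (e : ℝ) (he : 0 < e) :
    ∃ δ : ℝ, 0 < δ ∧ ∀ p q : Fin 2 → ℝ, nrm (p - q) ≤ δ → |f p - f q| ≤ e := by
  obtain ⟨δ, hδ, hdist⟩ := Metric.uniformContinuous_iff.1 hf e he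
  refine ⟨δ / 2, by positivity, fun p q hpq => ?_⟩
  have hd : dist p q ≤ δ / 2 := by
    rw [dist_pi_le_iff (by positivity)]
    intro i
    rw [Real.dist_eq]
    calc |p i - q i| = |(p - q) i| := by simp
      _ ≤ nrm (p - q) := abs_le_nrm _ i
      _ ≤ δ / 2 := hpq
  have := hdist (lt_of_le_of_lt hd (by linarith))
  rw [Real.dist_eq] at this
  linarith [le_of_lt this]

-- chunk F
lemma Pn_zero (ε : ℕ → Fin 2) : Pn ε 0 = [] := rfl

lemma Pn_length (ε : ℕ → Fin 2) (n : ℕ) : (Pn ε n).length = n := by simp [Pn]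

lemma Ssub_one (a : Fin 2 → Z2 → ℝ)
    (hsr : ∀ (η : Fin 2) (γ : Z2), subd (a η) (Wsel η) (fun _ => (1:ℝ)) γ = 1)
    (l : List (Fin 2)) : Ssub a l (fun _ => (1:ℝ)) = fun _ => (1:ℝ) := by
  induction l with
  | nil => rfl
  | cons η rest ih =>
      show Ssub a rest (subd (a η) (Wsel η) (fun _ => (1:ℝ))) = _
      have : subd (a η) (Wsel η) (fun _ => (1:ℝ)) = fun _ => (1:ℝ) := funext (hsr η)
      rw [this, ih]

lemma supp_bound (a : Fin 2 → Z2 → ℝ) (M : ℝ) (hM0 : 0 ≤ M)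
    (hM : ∀ (η : Fin 2) (γ : Z2), a η γ ≠ 0 → nrm (castV γ) ≤ M) (ε : ℕ → Fin 2) :
    ∀ (n : ℕ) (γ : Z2), Ssub a (Pn ε n) delta γ ≠ 0 →
      nrm ((WR (Pn ε n))⁻¹.mulVec (castV γ)) ≤ 3 * M * (1 - (3/4 : ℝ) ^ n) := by
  intro n
  induction n with
  | zero =>
      intro γ hγ
      have : γ = 0 := by
        by_contra hne
        exact hγ (by simp [Pn_zero, Ssub, delta, hne])
      subst this
      rw [Pn_zero, WRinv_nil]
      have : castV (0 : Z2) = 0 := by funext i; simp [castV]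
      rw [this]
      have : nrm 0 = 0 := by simp [nrm]
      rw [this]
      simp
  | succ n ih =>
      intro γ hγ
      rw [Pn_succ, Ssub_append] at hγ
      obtain ⟨α, h1, h2⟩ := subd_ne_zero _ _ _ _ hγ
      rw [Pn_succ, WRinv_append]
      set η := ε n
      -- decompose
      have hdec : castV γ = castV (γ - (Wsel η).mulVec α) + castV ((Wsel η).mulVec α) := by
        rw [← castV_add, sub_add_cancel]
      have hVγ : (VR η).mulVec (castV γ)
          = (VR η).mulVec (castV (γ - (Wsel η).mulVec α)) + castV α := by
        rw [hdec, Matrix.mulVec_add]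
        congr 1
        rw [castV_mulVec, Matrix.mulVec_mulVec]
        show ((VR η) * Wr η).mulVec (castV α) = castV α
        rw [VW_eq_one]
        simp
      rw [hVγ, Matrix.mulVec_add]
      have hb1 : nrm ((WR (Pn ε n))⁻¹.mulVec ((VR η).mulVec (castV (γ - (Wsel η).mulVec α))))
          ≤ (3/4:ℝ)^n * (3/4 * M) := by
        calc _ ≤ (3/4:ℝ)^(Pn ε n).length * nrm ((VR η).mulVec (castV (γ - (Wsel η).mulVec α))) :=
              WRinv_contract _ _
          _ ≤ (3/4:ℝ)^n * (3/4 * M) := by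
              rw [Pn_length]
              apply mul_le_mul_of_nonneg_left _ (by positivity)
              calc nrm ((VR η).mulVec (castV (γ - (Wsel η).mulVec α)))
                  ≤ 3/4 * nrm (castV (γ - (Wsel η).mulVec α)) := VR_contract _ _
                _ ≤ 3/4 * M := by
                    apply mul_le_mul_of_nonneg_left (hM η _ h1) (by norm_num)
      have hb2 : nrm ((WR (Pn ε n))⁻¹.mulVec (castV α)) ≤ 3 * M * (1 - (3/4:ℝ)^n) := ih α h2
      calc nrm ((WR (Pn ε n))⁻¹.mulVec ((VR η).mulVec (castV (γ - (Wsel η).mulVec α)))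
              + (WR (Pn ε n))⁻¹.mulVec (castV α))
          ≤ _ + _ := nrm_add_le _ _
        _ ≤ (3/4:ℝ)^n * (3/4 * M) + 3 * M * (1 - (3/4:ℝ)^n) := add_le_add hb1 hb2
        _ ≤ 3 * M * (1 - (3/4:ℝ)^(n+1)) := by ring_nf; nlinarith [pow_nonneg (by norm_num : (0:ℝ) ≤ 3/4) n]

-- chunk G : the sum rule
theorem sum_rule (a : Fin 2 → Z2 → ℝ) (ha : ∀ η, (Function.support (a η)).Finite)
    (η2 : Fin 2) (fe : (Fin 2 → ℝ) → ℝ) (hne : fe ≠ 0) (huc : UniformContinuous fe)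
    (happrox : ∀ e : ℝ, 0 < e → ∃ N : ℕ, ∀ n ≥ N, ∀ α : Z2,
      |fe ((WR (Pn (fun _ => η2) n))⁻¹.mulVec (castV α)) - Ssub a (Pn (fun _ => η2) n) delta α| < e)
    (γ : Z2) : subd (a η2) (Wsel η2) (fun _ => (1:ℝ)) γ = 1 := by
  classical
  set ε : ℕ → Fin 2 := fun _ => η2 with hε
  set W := Wsel η2
  set t' : Finset Z2 :=
    (subd_fin_support (a η2) (ha η2) W (Wsel_mulVec_inj η2) γ).toFinset with ht'
  have ht'mem : ∀ ν : Z2, a η2 (γ - W.mulVec ν) ≠ 0 → ν ∈ t' := by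
    intro ν h
    rw [ht', Set.Finite.mem_toFinset]
    exact h
  set S : ℝ := ∑ ν ∈ t', a η2 (γ - W.mulVec ν) with hS
  have hsubdS : subd (a η2) W (fun _ => (1:ℝ)) γ = S := by
    rw [subd_eq_sum _ _ _ _ t' ht'mem, hS]
    simp
  rw [hsubdS]
  -- get a point where fe is nonzero
  obtain ⟨x, hx⟩ : ∃ x, fe x ≠ 0 := by
    by_contra hcon
    push_neg at hcon
    exact hne (funext hcon)
  -- main claim
  have claim : ∀ e : ℝ, 0 < e → |S - 1| * |fe x| ≤ e := by
    intro e he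
    set T : ℝ := ∑ ν ∈ t', |a η2 (γ - W.mulVec ν)| with hT
    have hT0 : 0 ≤ T := Finset.sum_nonneg (fun _ _ => abs_nonneg _)
    set e' : ℝ := e / (2 * (T + 1)) with he'def
    have he' : 0 < e' := by positivity
    obtain ⟨δ, hδ, hUC⟩ := uc_nrm fe huc e' he'
    obtain ⟨N₁, hN₁⟩ := happrox e' he'
    -- bound B
    obtain ⟨B₀, hB₀0, hB₀⟩ := finset_bound t' (fun ν => nrm (castV ν))
    set B : ℝ := B₀ + nrm (castV γ) with hB
    have hB0 : 0 ≤ B := add_nonneg hB₀0 (nrm_nonneg _)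
    have hBν : ∀ ν ∈ t', nrm (castV ν) ≤ B := fun ν hν =>
      le_add_of_le_of_nonneg (hB₀ ν hν) (nrm_nonneg _)
    have hBγ : nrm (castV γ) ≤ B := le_add_of_nonneg_of_le hB₀0 le_rfl
    -- choose n
    obtain ⟨n₂, hn₂⟩ : ∃ k : ℕ, (3/4 : ℝ) ^ k < δ / (B + 1) := by
      apply exists_pow_lt_of_lt_one (by positivity) (by norm_num)
    set n := max N₁ n₂ with hn
    have hnN₁ : N₁ ≤ n := le_max_left _ _
    have hgeo : (3/4 : ℝ) ^ n * (B + 1) ≤ δ := by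
      have h1 : (3/4 : ℝ) ^ n ≤ (3/4 : ℝ) ^ n₂ :=
        pow_le_pow_of_le_one (by norm_num) (by norm_num) (le_max_right _ _)
      have h2 : (3/4 : ℝ) ^ n₂ * (B + 1) < δ := by
        rw [← lt_div_iff₀ (by positivity)]
        exact hn₂
      nlinarith [pow_nonneg (by norm_num : (0:ℝ) ≤ 3/4) n]
    set l := Pn ε n with hl
    set g := Ssub a l delta with hg
    -- the rounded point
    set A : Z2 := fun i => round (((WR l).mulVec x) i) with hA
    have hAx : nrm ((WR l)⁻¹.mulVec (castV A) - x) ≤ (3/4:ℝ)^n * (1/2) := by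
      have e1 : (WR l)⁻¹.mulVec (castV A) - x
          = (WR l)⁻¹.mulVec (castV A - (WR l).mulVec x) := by
        rw [Matrix.mulVec_sub, WRinv_cancel]
      rw [e1]
      calc nrm ((WR l)⁻¹.mulVec (castV A - (WR l).mulVec x))
          ≤ (3/4:ℝ)^l.length * nrm (castV A - (WR l).mulVec x) := WRinv_contract _ _
        _ ≤ (3/4:ℝ)^n * (1/2) := by
            rw [hl, Pn_length]
            apply mul_le_mul_of_nonneg_left _ (by positivity)
            apply nrm_le
            intro i
            have hcoord : (castV A - (WR l).mulVec x) i
                = -(((WR l).mulVec x) i - (round (((WR l).mulVec x) i) : ℝ)) := by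
              simp [castV, hA]
            rw [hcoord, abs_neg]
            exact abs_sub_round _
    -- arguments near x
    have harg : ∀ ν ∈ t', nrm ((WR l)⁻¹.mulVec (castV (A + ν)) - x) ≤ δ := by
      intro ν hν
      have e1 : (WR l)⁻¹.mulVec (castV (A + ν)) - x
          = ((WR l)⁻¹.mulVec (castV A) - x) + (WR l)⁻¹.mulVec (castV ν) := by
        rw [castV_add, Matrix.mulVec_add]
        abel
      rw [e1]
      calc nrm _ ≤ nrm ((WR l)⁻¹.mulVec (castV A) - x) + nrm ((WR l)⁻¹.mulVec (castV ν)) :=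
            nrm_add_le _ _
        _ ≤ (3/4:ℝ)^n * (1/2) + (3/4:ℝ)^n * B := by
            apply add_le_add hAx
            calc nrm ((WR l)⁻¹.mulVec (castV ν)) ≤ (3/4:ℝ)^l.length * nrm (castV ν) :=
                  WRinv_contract _ _
              _ ≤ (3/4:ℝ)^n * B := by
                  rw [hl, Pn_length]
                  exact mul_le_mul_of_nonneg_left (hBν ν hν) (by positivity)
        _ ≤ (3/4:ℝ)^n * (B + 1) := by nlinarith [pow_nonneg (by norm_num : (0:ℝ) ≤ 3/4) n]
        _ ≤ δ := hgeo
    -- the evaluation point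
    set β : Z2 := γ + W.mulVec A with hβ
    -- identity
    have hrec : Ssub a (Pn ε (n+1)) delta β = ∑ ν ∈ t', a η2 (γ - W.mulVec ν) * g (A + ν) := by
      have h1 : Ssub a (Pn ε (n+1)) delta = subd (a η2) W (Ssub a l delta) := by
        rw [Pn_succ, Ssub_append, hl]
      rw [h1]
      have himage : ∀ μ : Z2, a η2 (β - W.mulVec μ) ≠ 0 → μ ∈ t'.image (fun ν => A + ν) := by
        intro μ hμ
        have : β - W.mulVec μ = γ - W.mulVec (μ - A) := by
          rw [Matrix.mulVec_sub, hβ]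
          abel
        rw [this] at hμ
        refine Finset.mem_image.2 ⟨μ - A, ht'mem _ hμ, by abel⟩
      rw [subd_eq_sum _ _ _ _ _ himage, Finset.sum_image (by intro p _ q _ h; simpa using h)]
      apply Finset.sum_congr rfl
      intro ν hν
      congr 2
      rw [Matrix.mulVec_add, hβ]
      abel
    -- approximation bounds
    have happ_n : ∀ μ : Z2, |fe ((WR l)⁻¹.mulVec (castV μ)) - g μ| < e' := by
      intro μ
      exact hN₁ n hnN₁ μ
    have happ_n1 : ∀ μ : Z2, |fe ((WR (Pn ε (n+1)))⁻¹.mulVec (castV μ)) - Ssub a (Pn ε (n+1)) delta μ| < e' := by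
      intro μ
      exact hN₁ (n+1) (le_trans hnN₁ (Nat.le_succ n)) μ
    -- per-ν bound
    have hper : ∀ ν ∈ t', |fe x - g (A + ν)| ≤ 2 * e' := by
      intro ν hν
      have h1 : |fe x - fe ((WR l)⁻¹.mulVec (castV (A + ν)))| ≤ e' := by
        rw [abs_sub_comm]
        exact hUC _ _ (by simpa [sub_eq_add_neg] using harg ν hν)
      have h2 := happ_n (A + ν)
      calc |fe x - g (A + ν)|
          ≤ |fe x - fe ((WR l)⁻¹.mulVec (castV (A + ν)))|
            + |fe ((WR l)⁻¹.mulVec (castV (A + ν))) - g (A + ν)| := abs_sub_le _ _ _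
        _ ≤ e' + e' := add_le_add h1 (le_of_lt h2)
        _ = 2 * e' := by ring
    -- LHS bound
    have hLHS : |Ssub a (Pn ε (n+1)) delta β - fe x| ≤ 2 * e' := by
      have harg' : nrm ((WR (Pn ε (n+1)))⁻¹.mulVec (castV β) - x) ≤ δ := by
        have hWr : W.map (Int.cast : ℤ → ℝ) = Wr η2 := rfl
        have hinner : (VR η2).mulVec ((Wr η2).mulVec (castV A)) = castV A := by
          rw [Matrix.mulVec_mulVec, VW_eq_one, Matrix.one_mulVec]
        have e1 : (WR (Pn ε (n+1)))⁻¹.mulVec (castV β)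
            = (WR l)⁻¹.mulVec ((VR η2).mulVec (castV γ)) + (WR l)⁻¹.mulVec (castV A) := by
          rw [Pn_succ]
          show (WR (l ++ [η2]))⁻¹.mulVec (castV β) = _
          rw [WRinv_append, hβ, castV_add, Matrix.mulVec_add, Matrix.mulVec_add]
          congr 1
          rw [castV_mulVec, hWr, hinner]
        have e2 : (WR (Pn ε (n+1)))⁻¹.mulVec (castV β) - x
            = (WR l)⁻¹.mulVec ((VR η2).mulVec (castV γ)) + ((WR l)⁻¹.mulVec (castV A) - x) := by
          rw [e1]; abel
        rw [e2]
        calc nrm _ ≤ nrm ((WR l)⁻¹.mulVec ((VR η2).mulVec (castV γ)))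
              + nrm ((WR l)⁻¹.mulVec (castV A) - x) := nrm_add_le _ _
          _ ≤ (3/4:ℝ)^n * (3/4 * B) + (3/4:ℝ)^n * (1/2) := by
              apply add_le_add _ hAx
              calc nrm ((WR l)⁻¹.mulVec ((VR η2).mulVec (castV γ)))
                  ≤ (3/4:ℝ)^l.length * nrm ((VR η2).mulVec (castV γ)) := WRinv_contract _ _
                _ ≤ (3/4:ℝ)^n * (3/4 * B) := by
                    rw [hl, Pn_length]
                    apply mul_le_mul_of_nonneg_left _ (by positivity)
                    calc nrm ((VR η2).mulVec (castV γ)) ≤ 3/4 * nrm (castV γ) := VR_contract _ _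
                      _ ≤ 3/4 * B := by linarith
          _ ≤ (3/4:ℝ)^n * (B + 1) := by nlinarith [pow_nonneg (by norm_num : (0:ℝ) ≤ 3/4) n, hB0]
          _ ≤ δ := hgeo
      have h1 : |fe ((WR (Pn ε (n+1)))⁻¹.mulVec (castV β)) - fe x| ≤ e' :=
        hUC _ _ (by simpa [sub_eq_add_neg] using harg')
      have h2 := happ_n1 β
      calc |Ssub a (Pn ε (n+1)) delta β - fe x|
          ≤ |Ssub a (Pn ε (n+1)) delta β - fe ((WR (Pn ε (n+1)))⁻¹.mulVec (castV β))|
            + |fe ((WR (Pn ε (n+1)))⁻¹.mulVec (castV β)) - fe x| := abs_sub_le _ _ _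
        _ ≤ e' + e' := add_le_add (by rw [abs_sub_comm]; exact le_of_lt h2) h1
        _ = 2 * e' := by ring
    -- assemble
    have hsum : ∑ ν ∈ t', a η2 (γ - W.mulVec ν) * (fe x - g (A + ν))
        = S * fe x - ∑ ν ∈ t', a η2 (γ - W.mulVec ν) * g (A + ν) := by
      calc ∑ ν ∈ t', a η2 (γ - W.mulVec ν) * (fe x - g (A + ν))
          = ∑ ν ∈ t', (a η2 (γ - W.mulVec ν) * fe x - a η2 (γ - W.mulVec ν) * g (A + ν)) :=
            Finset.sum_congr rfl (fun ν _ => by ring)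
        _ = (∑ ν ∈ t', a η2 (γ - W.mulVec ν) * fe x)
            - ∑ ν ∈ t', a η2 (γ - W.mulVec ν) * g (A + ν) := Finset.sum_sub_distrib _ _
        _ = S * fe x - ∑ ν ∈ t', a η2 (γ - W.mulVec ν) * g (A + ν) := by
            rw [hS, Finset.sum_mul]
    have hdecomp : S * fe x - fe x
        = (∑ ν ∈ t', a η2 (γ - W.mulVec ν) * (fe x - g (A + ν)))
          + (Ssub a (Pn ε (n+1)) delta β - fe x) := by
      rw [hrec, hsum]
      ring
    have habs : |S * fe x - fe x| ≤ T * (2 * e') + 2 * e' := by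
      rw [hdecomp]
      calc |_ + _| ≤ |∑ ν ∈ t', a η2 (γ - W.mulVec ν) * (fe x - g (A + ν))|
            + |Ssub a (Pn ε (n+1)) delta β - fe x| := abs_add_le _ _
        _ ≤ T * (2 * e') + 2 * e' := by
            apply add_le_add _ hLHS
            calc |∑ ν ∈ t', a η2 (γ - W.mulVec ν) * (fe x - g (A + ν))|
                ≤ ∑ ν ∈ t', |a η2 (γ - W.mulVec ν) * (fe x - g (A + ν))| :=
                  Finset.abs_sum_le_sum_abs _ _
              _ ≤ ∑ ν ∈ t', |a η2 (γ - W.mulVec ν)| * (2 * e') := by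
                  apply Finset.sum_le_sum
                  intro ν hν
                  rw [abs_mul]
                  exact mul_le_mul_of_nonneg_left (hper ν hν) (abs_nonneg _)
              _ = T * (2 * e') := by rw [hT, Finset.sum_mul]
    calc |S - 1| * |fe x| = |S * fe x - fe x| := by
          rw [← abs_mul]
          congr 1
          ring
      _ ≤ T * (2 * e') + 2 * e' := habs
      _ = 2 * e' * (T + 1) := by ring
      _ = e := by
          rw [he'def]
          field_simp
  -- conclude S = 1
  have hfx : 0 < |fe x| := abs_pos.2 hx
  by_contra hSne
  have hd : 0 < |S - 1| * |fe x| := by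
    apply mul_pos _ hfx
    rw [abs_pos]
    intro h
    exact hSne (by linarith [sub_eq_zero.1 h])
  have := claim (|S - 1| * |fe x| / 2) (by positivity)
  linarith

lemma nrm_neg (x : Fin 2 → ℝ) : nrm (-x) = nrm x := by simp [nrm]

lemma nrm_castV_uvec (i : Fin 2) : nrm (castV (uvec i)) = 1 := by
  fin_cases i <;> simp [nrm, castV, uvec]


/-- Suppose the adaptive directional subdivision scheme with masks `a₀, a₁` converges
in `C(ℝ²)`, with compactly supported limit functions `f_ε`. Then for every `ε ∈ E_∞`,
`lim_{n→∞} sup { ‖∇(S_{P_nε} c)‖_∞ : c bounded, ‖∇c‖_∞ ≤ 1 } = 0`; the iterated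
subdivision operators are asymptotically contractive on differences. -/
theorem stmt15 (a : Fin 2 → Z2 → ℝ) (ha : ∀ η, (Function.support (a η)).Finite)
    (f : (ℕ → Fin 2) → (Fin 2 → ℝ) → ℝ)
    (hf : ∀ ε : ℕ → Fin 2, f ε ≠ 0 ∧ UniformContinuous (f ε) ∧
      HasCompactSupport (f ε) ∧
      ∀ η : ℝ, 0 < η → ∃ N : ℕ, ∀ n ≥ N, ∀ α : Z2,
        |f ε ((WR (Pn ε n))⁻¹.mulVec (castV α)) - Ssub a (Pn ε n) delta α| < η) :
    ∀ ε : ℕ → Fin 2, ∀ η : ℝ, 0 < η → ∃ N : ℕ, ∀ n ≥ N,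
      ∀ c : Z2 → ℝ, Bdd c → (∀ (α : Z2) (i : Fin 2), |nabla c α i| ≤ 1) →
      ∀ (α : Z2) (i : Fin 2), |nabla (Ssub a (Pn ε n) c) α i| < η := by
  classical
  intro ε tgt htgt
  -- mask support bound
  obtain ⟨M, hM0, hM⟩ : ∃ M : ℝ, 0 ≤ M ∧ ∀ (η : Fin 2) (γ : Z2), a η γ ≠ 0 → nrm (castV γ) ≤ M := by
    obtain ⟨B, hB0, hB⟩ := finset_bound ((ha 0).toFinset ∪ (ha 1).toFinset)
      (fun γ => nrm (castV γ))
    refine ⟨B, hB0, fun η γ hγ => ?_⟩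
    apply hB
    rw [Finset.mem_union]
    fin_cases η
    · exact Or.inl ((ha 0).mem_toFinset.2 hγ)
    · exact Or.inr ((ha 1).mem_toFinset.2 hγ)
  -- sum rules
  have hsr : ∀ (η2 : Fin 2) (γ : Z2), subd (a η2) (Wsel η2) (fun _ => (1:ℝ)) γ = 1 := by
    intro η2 γ
    obtain ⟨h1, h2, _, h4⟩ := hf (fun _ => η2)
    exact sum_rule a ha η2 (f (fun _ => η2)) h1 h2 h4 γ
  have hone := Ssub_one a hsr
  -- limit function data for ε
  obtain ⟨_, huc, _, happrox⟩ := hf ε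
  -- constants
  set K : ℤ := ⌈3 * M⌉ + 2 with hK
  have hK2 : (2:ℤ) ≤ K := by
    have : (0:ℤ) ≤ ⌈3 * M⌉ := Int.ceil_nonneg (by linarith)
    omega
  set KR : ℝ := (K : ℝ) with hKR
  have hKR2 : (2:ℝ) ≤ KR := by rw [hKR]; exact_mod_cast hK2
  have hKR0 : (0:ℝ) ≤ KR := by linarith
  have hKRM : 3 * M + 2 ≤ KR := by
    rw [hKR, hK]
    push_cast
    have := Int.le_ceil (3 * M)
    linarith
  set Q : ℝ := (2 * KR + 1)^2 * (6 * KR) with hQ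
  have hQ0 : 0 ≤ Q := by positivity
  set e' : ℝ := tgt / (Q + 1) with he'
  have he'0 : 0 < e' := by positivity
  obtain ⟨δ, hδ0, hUC⟩ := uc_nrm (f ε) huc e' he'0
  obtain ⟨N₁, hN₁⟩ := happrox e' he'0
  obtain ⟨N₂, hN₂⟩ : ∃ k : ℕ, (3/4 : ℝ) ^ k < δ := exists_pow_lt_of_lt_one hδ0 (by norm_num)
  refine ⟨max N₁ N₂, fun n hn c _ hnab β i => ?_⟩
  have hnN₁ : N₁ ≤ n := le_trans (le_max_left _ _) hn
  have hsmall : (3/4 : ℝ) ^ n ≤ δ := by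
    calc (3/4:ℝ)^n ≤ (3/4:ℝ)^N₂ :=
        pow_le_pow_of_le_one (by norm_num) (by norm_num) (le_trans (le_max_right _ _) hn)
      _ ≤ δ := le_of_lt hN₂
  set l := Pn ε n with hl
  set g := Ssub a l delta with hg
  set P : Fin 2 → ℝ := (WR l)⁻¹.mulVec (castV β) with hP
  -- contraction of small integer vectors
  have hVsmall : ∀ v : Z2, nrm (castV v) ≤ 1 → nrm ((WR l)⁻¹.mulVec (castV v)) ≤ 1 := by
    intro v hv
    calc nrm ((WR l)⁻¹.mulVec (castV v)) ≤ (3/4:ℝ)^l.length * nrm (castV v) := WRinv_contract _ _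
      _ ≤ 1 := by
          rw [hl, Pn_length]
          nlinarith [pow_le_one₀ (by norm_num : (0:ℝ) ≤ 3/4) (by norm_num : (3/4:ℝ) ≤ 1) (n := n),
            pow_nonneg (by norm_num : (0:ℝ) ≤ 3/4) n, nrm_nonneg (castV v)]
  -- the index window
  set A : Finset Z2 := Fintype.piFinset (fun j => Finset.Icc (⌈P j⌉ - K) (⌈P j⌉ + K)) with hA
  set α₀ : Z2 := fun j => ⌈P j⌉ with hα₀
  have hα₀A : α₀ ∈ A := by
    rw [hA, Fintype.mem_piFinset]
    intro j
    rw [Finset.mem_Icc, hα₀]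
    simp only
    omega
  -- covering property
  have hcov : ∀ β' : Z2, nrm ((WR l)⁻¹.mulVec (castV β') - P) ≤ 1 →
      ∀ α : Z2, g (β' - (WprodL l).mulVec α) ≠ 0 → α ∈ A := by
    intro β' hβ' α hα
    have hb := supp_bound a M hM0 hM ε n _ hα
    rw [← hl] at hb
    have hdec : (WR l)⁻¹.mulVec (castV (β' - (WprodL l).mulVec α))
        = ((WR l)⁻¹.mulVec (castV β') - P) + (P - castV α) := by
      rw [castV_sub, Matrix.mulVec_sub, mulVec_int_cancel]
      abel
    have hPα : nrm (P - castV α) ≤ 3 * M + 1 := by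
      have e1 : P - castV α = (WR l)⁻¹.mulVec (castV (β' - (WprodL l).mulVec α))
          + (-((WR l)⁻¹.mulVec (castV β') - P)) := by
        rw [hdec]; abel
      rw [e1]
      calc nrm _ ≤ nrm ((WR l)⁻¹.mulVec (castV (β' - (WprodL l).mulVec α)))
            + nrm (-((WR l)⁻¹.mulVec (castV β') - P)) := nrm_add_le _ _
        _ ≤ 3 * M * (1 - (3/4:ℝ)^n) + 1 := by
            apply add_le_add hb
            rw [nrm_neg]
            exact hβ'
        _ ≤ 3 * M + 1 := by nlinarith [pow_nonneg (by norm_num : (0:ℝ) ≤ 3/4) n]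
    rw [hA, Fintype.mem_piFinset]
    intro j
    have h1 : |P j - (α j : ℝ)| ≤ 3 * M + 1 := by
      have h := le_trans (abs_le_nrm (P - castV α) j) hPα
      simpa [castV] using h
    have h2 : |(⌈P j⌉ : ℝ) - P j| ≤ 1 := by
      rw [abs_of_nonneg (by linarith [Int.le_ceil (P j)])]
      linarith [Int.ceil_lt_add_one (P j)]
    have h3 : |(α j : ℝ) - (⌈P j⌉ : ℝ)| ≤ KR := by
      calc |(α j : ℝ) - (⌈P j⌉ : ℝ)| ≤ |(α j : ℝ) - P j| + |P j - (⌈P j⌉ : ℝ)| := abs_sub_le _ _ _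
        _ ≤ (3 * M + 1) + 1 := by
            apply add_le_add
            · rw [abs_sub_comm]; exact h1
            · rw [abs_sub_comm]; exact h2
        _ ≤ KR := by linarith
    have h4 : |α j - ⌈P j⌉| ≤ K := by
      have h5 : ((|α j - ⌈P j⌉| : ℤ) : ℝ) ≤ ((K : ℤ) : ℝ) := by
        push_cast
        rw [← hKR]
        exact h3
      exact_mod_cast h5
    rw [Finset.mem_Icc]
    rw [abs_le] at h4
    omega
  have hcovβ : ∀ α : Z2, g (β - (WprodL l).mulVec α) ≠ 0 → α ∈ A := by
    apply hcov
    have : (WR l)⁻¹.mulVec (castV β) - P = 0 := by rw [hP]; abel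
    rw [this]
    have : nrm 0 = 0 := by simp [nrm]
    rw [this]
    norm_num
  have hcovβ' : ∀ α : Z2, g ((β - uvec i) - (WprodL l).mulVec α) ≠ 0 → α ∈ A := by
    apply hcov
    have e1 : (WR l)⁻¹.mulVec (castV (β - uvec i)) - P
        = -((WR l)⁻¹.mulVec (castV (uvec i))) := by
      rw [castV_sub, Matrix.mulVec_sub, hP]
      abel
    rw [e1, nrm_neg]
    exact hVsmall _ (le_of_eq (nrm_castV_uvec i))
  -- representations
  have hrepr1 : Ssub a l c β = ∑ α ∈ A, g (β - (WprodL l).mulVec α) * c α :=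
    Ssub_repr a ha l c β A hcovβ
  have hrepr2 : Ssub a l c (β - uvec i)
      = ∑ α ∈ A, g ((β - uvec i) - (WprodL l).mulVec α) * c α :=
    Ssub_repr a ha l c (β - uvec i) A hcovβ'
  have honeβ : (1:ℝ) = ∑ α ∈ A, g (β - (WprodL l).mulVec α) := by
    have := Ssub_repr a ha l (fun _ => (1:ℝ)) β A hcovβ
    rw [hone] at this
    simpa using this
  have honeβ' : (1:ℝ) = ∑ α ∈ A, g ((β - uvec i) - (WprodL l).mulVec α) := by
    have := Ssub_repr a ha l (fun _ => (1:ℝ)) (β - uvec i) A hcovβ'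
    rw [hone] at this
    simpa using this
  -- difference as a sum against c α - c α₀
  have hkey : nabla (Ssub a l c) β i
      = ∑ α ∈ A, (g ((β - uvec i) - (WprodL l).mulVec α) - g (β - (WprodL l).mulVec α))
          * (c α - c α₀) := by
    rw [nabla_apply, hrepr1, hrepr2]
    have hzero : (∑ α ∈ A, (g ((β - uvec i) - (WprodL l).mulVec α) - g (β - (WprodL l).mulVec α))) = 0 := by
      rw [Finset.sum_sub_distrib, ← honeβ', ← honeβ, sub_self]
    have h2 : ∑ α ∈ A, (g ((β - uvec i) - (WprodL l).mulVec α) - g (β - (WprodL l).mulVec α))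
          * (c α - c α₀)
        = (∑ α ∈ A, (g ((β - uvec i) - (WprodL l).mulVec α) * c α - g (β - (WprodL l).mulVec α) * c α))
          - (∑ α ∈ A, (g ((β - uvec i) - (WprodL l).mulVec α) - g (β - (WprodL l).mulVec α))) * c α₀ := by
      rw [Finset.sum_mul, ← Finset.sum_sub_distrib]
      exact Finset.sum_congr rfl (fun α _ => by ring)
    rw [h2, hzero, zero_mul, sub_zero, Finset.sum_sub_distrib]
  -- per-term bounds
  have hbracket : ∀ α ∈ A,
      |g ((β - uvec i) - (WprodL l).mulVec α) - g (β - (WprodL l).mulVec α)| ≤ 3 * e' := by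
    intro α _
    set p := (WR l)⁻¹.mulVec (castV ((β - uvec i) - (WprodL l).mulVec α)) with hp
    set q := (WR l)⁻¹.mulVec (castV (β - (WprodL l).mulVec α)) with hq
    have h1 : |g ((β - uvec i) - (WprodL l).mulVec α) - f ε p| < e' := by
      rw [abs_sub_comm]
      exact hN₁ n hnN₁ _
    have h2 : |f ε q - g (β - (WprodL l).mulVec α)| < e' := hN₁ n hnN₁ _
    have h3 : |f ε p - f ε q| ≤ e' := by
      apply hUC
      have e1 : p - q = (WR l)⁻¹.mulVec (castV (((β - uvec i) - (WprodL l).mulVec α)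
          - (β - (WprodL l).mulVec α))) := by
        rw [castV_sub, Matrix.mulVec_sub]
      have e2 : ((β - uvec i) - (WprodL l).mulVec α) - (β - (WprodL l).mulVec α) = -(uvec i) := by
        abel
      rw [e1, e2]
      have e3 : castV (-(uvec i)) = -(castV (uvec i)) := by
        funext j; simp [castV]
      rw [e3]
      have e4 : (WR l)⁻¹.mulVec (-(castV (uvec i))) = -((WR l)⁻¹.mulVec (castV (uvec i))) := by
        rw [Matrix.mulVec_neg]
      rw [e4, nrm_neg]
      calc nrm ((WR l)⁻¹.mulVec (castV (uvec i)))
          ≤ (3/4:ℝ)^l.length * nrm (castV (uvec i)) := WRinv_contract _ _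
        _ = (3/4:ℝ)^n := by rw [hl, Pn_length, nrm_castV_uvec, mul_one]
        _ ≤ δ := hsmall
    calc |g ((β - uvec i) - (WprodL l).mulVec α) - g (β - (WprodL l).mulVec α)|
        ≤ |g ((β - uvec i) - (WprodL l).mulVec α) - f ε p| + |f ε p - g (β - (WprodL l).mulVec α)| :=
          abs_sub_le _ _ _
      _ ≤ |g ((β - uvec i) - (WprodL l).mulVec α) - f ε p|
          + (|f ε p - f ε q| + |f ε q - g (β - (WprodL l).mulVec α)|) := by
          apply add_le_add_right (abs_sub_le _ _ _)
      _ ≤ e' + (e' + e') := by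
          apply add_le_add (le_of_lt h1) (add_le_add h3 (le_of_lt h2))
      _ = 3 * e' := by ring
  have hcdiff : ∀ α ∈ A, |c α - c α₀| ≤ 2 * KR := by
    intro α hαA
    rw [hA, Fintype.mem_piFinset] at hαA
    have hj : ∀ j : Fin 2, (|α j - α₀ j| : ℝ) ≤ KR := by
      intro j
      have hm := hαA j
      rw [Finset.mem_Icc] at hm
      have habs : |α j - α₀ j| ≤ K := by
        rw [hα₀]
        simp only
        rw [abs_le]
        omega
      have h6 : ((|α j - α₀ j| : ℤ) : ℝ) ≤ ((K : ℤ) : ℝ) := by exact_mod_cast habs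
      rw [hKR]
      push_cast at h6
      exact h6
    calc |c α - c α₀| ≤ (|α 0 - α₀ 0| : ℝ) + (|α 1 - α₀ 1| : ℝ) := lip2 c hnab α α₀
      _ ≤ KR + KR := add_le_add (hj 0) (hj 1)
      _ = 2 * KR := by ring
  -- card bound
  have hcard : (A.card : ℝ) ≤ (2 * KR + 1)^2 := by
    rw [hA, Fintype.card_piFinset]
    have hc : ∀ j : Fin 2, ((Finset.Icc (⌈P j⌉ - K) (⌈P j⌉ + K)).card : ℝ) = 2 * KR + 1 := by
      intro j
      rw [Int.card_Icc]
      have : (⌈P j⌉ + K + 1 - (⌈P j⌉ - K)) = 2 * K + 1 := by ring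
      rw [this]
      have h1 : ((2 * K + 1).toNat : ℤ) = 2 * K + 1 := Int.toNat_of_nonneg (by omega)
      have : ((2 * K + 1).toNat : ℝ) = ((2 * K + 1 : ℤ) : ℝ) := by exact_mod_cast h1
      rw [this]
      push_cast
      rw [hKR]
    rw [Fin.prod_univ_two]
    push_cast
    rw [hc 0, hc 1]
    nlinarith [hKR0]
  -- final estimate
  rw [hkey]
  calc |∑ α ∈ A, (g ((β - uvec i) - (WprodL l).mulVec α) - g (β - (WprodL l).mulVec α)) * (c α - c α₀)|
      ≤ ∑ α ∈ A, |(g ((β - uvec i) - (WprodL l).mulVec α) - g (β - (WprodL l).mulVec α)) * (c α - c α₀)| :=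
        Finset.abs_sum_le_sum_abs _ _
    _ ≤ ∑ α ∈ A, (3 * e') * (2 * KR) := by
        apply Finset.sum_le_sum
        intro α hαA
        rw [abs_mul]
        apply mul_le_mul (hbracket α hαA) (hcdiff α hαA) (abs_nonneg _) (by positivity)
    _ = (A.card : ℝ) * ((3 * e') * (2 * KR)) := by
        rw [Finset.sum_const, nsmul_eq_mul]
    _ ≤ (2 * KR + 1)^2 * ((3 * e') * (2 * KR)) := by
        apply mul_le_mul_of_nonneg_right hcard (by positivity)
    _ = Q * e' := by rw [hQ]; ring
    _ < tgt := by
        rw [he']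
        have h1 : Q / (Q+1) < 1 := (div_lt_one (by positivity)).2 (by linarith)
        calc Q * (tgt / (Q+1)) = tgt * (Q / (Q+1)) := by ring
          _ < tgt * 1 := by exact mul_lt_mul_of_pos_left h1 htgt
          _ = tgt := mul_one tgt
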